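/- Let p ≥ 1 and n ≥ 1 be integers, let G be an invertible p×p real matrix, let R be a p×p orthogonal matrix, and let l > 0 satisfy l^p = n·|det(G)| (equivalently, l = (n·Ω_p/Θ)^{1/p}·ρ_c, where Θ = Ω_p·ρ_c^p/|det(G)| is the thickness of the lattice, Ω_p the volume of the unit ball in ℝ^p, and ρ_c its covering radius). Let L = {(1/l)·Rᵀ Gᵀ f : f ∈ ℤ^p}. Then the Voronoi cell of the origin with respect to L, namely {z ∈ ℝ^p : ‖z‖ ≤ ‖z − x‖ for all x ∈ L}, has Lebesgue measure exactly 1/n. -/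

import Mathlib

open MeasureTheory Matrix Submodule Pointwise

set_option synthInstance.maxHeartbeats 1000000 in
theorem voronoi_aux (p : ℕ) (M : Matrix (Fin p) (Fin p) ℝ) (hM : IsUnit M.det) :
    volume {z : Fin p → ℝ | ∀ f : Fin p → ℤ,
      (∑ k, z k ^ 2) ≤ ∑ k, (z k - M.mulVec (fun i => (f i : ℝ)) k) ^ 2}
    = ENNReal.ofReal |M.det| := by
  have hMinv : Invertible M := M.invertibleOfIsUnitDet hM
  let b : Module.Basis (Fin p) ℝ (Fin p → ℝ) := (Pi.basisFun ℝ (Fin p)).map (M.toLinearEquiv' hMinv)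
  have hb : ∀ i k, b i k = M k i := by
    intro i k
    show (M.toLinearEquiv' hMinv) (Pi.basisFun ℝ (Fin p) i) k = M k i
    rw [Pi.basisFun_apply]
    show (Matrix.toLin' M) (Pi.single i 1) k = M k i
    rw [Matrix.toLin'_apply, Matrix.mulVec_single_one]
    rfl
  have hmem : ∀ x : Fin p → ℝ, x ∈ span ℤ (Set.range b) ↔
      ∃ f : Fin p → ℤ, M.mulVec (fun i => (f i : ℝ)) = x := by
    intro x
    rw [mem_span_range_iff_exists_fun]
    refine exists_congr fun c => ?_
    have hsum : ∑ i, c i • b i = M.mulVec (fun i => (c i : ℝ)) := by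
      funext k
      rw [Finset.sum_apply]
      simp only [Pi.smul_apply, hb, zsmul_eq_mul, Matrix.mulVec, dotProduct]
      exact Finset.sum_congr rfl fun i _ => mul_comm _ _
    rw [hsum]

  set Q : (Fin p → ℝ) → ℝ := fun z => ∑ k, z k ^ 2 with hQ
  have hQcont : Continuous Q := by fun_prop
  have hQnonneg : ∀ z, 0 ≤ Q z := fun z => Finset.sum_nonneg fun k _ => sq_nonneg _
  set V : Set (Fin p → ℝ) := {z | ∀ f : Fin p → ℤ,
      (∑ k, z k ^ 2) ≤ ∑ k, (z k - M.mulVec (fun i => (f i : ℝ)) k) ^ 2} with hV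
  have hVmem : ∀ z, z ∈ V ↔ ∀ f : Fin p → ℤ, Q z ≤ Q (z - M.mulVec (fun i => (f i : ℝ))) := by
    intro z
    refine forall_congr' fun f => ?_
    simp [hQ, Pi.sub_apply]
  have hVclosed : IsClosed V := by
    have : V = ⋂ f : Fin p → ℤ, {z : Fin p → ℝ |
        (∑ k, z k ^ 2) ≤ ∑ k, (z k - M.mulVec (fun i => (f i : ℝ)) k) ^ 2} := by
      ext z; simp [hV, Set.mem_iInter]
    rw [this]
    exact isClosed_iInter fun f => isClosed_le (by fun_prop) (by fun_prop)
  have hA : ∀ c : Fin p → ℝ, M⁻¹.mulVec (M.mulVec c) = c := by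
    intro c
    rw [Matrix.mulVec_mulVec, Matrix.nonsing_inv_mul M hM, Matrix.one_mulVec]
  have hmin : ∀ x : Fin p → ℝ, ∃ c₀ : Fin p → ℤ, ∀ c : Fin p → ℤ,
      Q (x - M.mulVec (fun i => (c₀ i : ℝ))) ≤ Q (x - M.mulVec (fun i => (c i : ℝ))) := by
    intro x
    set T : Set (Fin p → ℤ) := {c | Q (x - M.mulVec (fun i => (c i : ℝ))) ≤ Q x} with hT
    have h0T : (0 : Fin p → ℤ) ∈ T := by
      simp only [hT, Set.mem_setOf_eq]
      have h0 : (fun i => ((0 : Fin p → ℤ) i : ℝ)) = (0 : Fin p → ℝ) := by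
        funext i; simp
      rw [h0, Matrix.mulVec_zero, sub_zero]
    set s := Real.sqrt (Q x) with hs
    have hcomp : ∀ c ∈ T, ∀ k, |M.mulVec (fun i => (c i : ℝ)) k| ≤ 2 * s := by
      intro c hc k
      set w := M.mulVec (fun i => (c i : ℝ)) with hw
      have h1 : (x k - w k) ^ 2 ≤ Q x := by
        refine le_trans ?_ hc
        have := Finset.single_le_sum (f := fun k => ((x - w) k) ^ 2)
          (fun k _ => sq_nonneg _) (Finset.mem_univ k)
        simpa [hQ] using this
      have h2 : |x k - w k| ≤ s := by
        rw [← Real.sqrt_sq_eq_abs]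
        exact Real.sqrt_le_sqrt h1
      have h3 : |x k| ≤ s := by
        rw [← Real.sqrt_sq_eq_abs]
        exact Real.sqrt_le_sqrt
          (Finset.single_le_sum (f := fun k => x k ^ 2) (fun k _ => sq_nonneg _)
            (Finset.mem_univ k))
      have : |w k| ≤ |x k| + |x k - w k| := by
        have := abs_sub (x k) (x k - w k)
        simpa using this
      linarith
    have hcbound : ∀ c ∈ T, ∀ i, |(c i : ℝ)| ≤ ∑ k, |M⁻¹ i k| * (2 * s) := by
      intro c hc i
      have hci : (c i : ℝ) = ∑ k, M⁻¹ i k * M.mulVec (fun i => (c i : ℝ)) k := by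
        conv_lhs => rw [show ((c i : ℝ)) = M⁻¹.mulVec (M.mulVec fun i => (c i : ℝ)) i from by
          rw [hA]]
        rfl
      rw [hci]
      refine le_trans (Finset.abs_sum_le_sum_abs _ _) (Finset.sum_le_sum fun k _ => ?_)
      rw [abs_mul]
      exact mul_le_mul_of_nonneg_left (hcomp c hc k) (abs_nonneg _)
    have hTfin : T.Finite := by
      refine Set.Finite.subset (Set.Finite.pi (fun i : Fin p =>
        Set.finite_Icc (-(⌈∑ k, |M⁻¹ i k| * (2 * s)⌉)) ⌈∑ k, |M⁻¹ i k| * (2 * s)⌉)) ?_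
      intro c hc
      rw [Set.mem_pi]
      intro i _
      rw [Set.mem_Icc, ← abs_le]
      have h1 : (|c i| : ℝ) ≤ ((⌈∑ k, |M⁻¹ i k| * (2 * s)⌉ : ℤ) : ℝ) := by
        push_cast
        exact le_trans (by exact_mod_cast hcbound c hc i) (Int.le_ceil _)
      exact_mod_cast h1
    obtain ⟨c₀, hc₀T, hc₀min⟩ := Set.exists_min_image T
      (fun c => Q (x - M.mulVec (fun i => (c i : ℝ)))) hTfin ⟨0, h0T⟩
    refine ⟨c₀, fun c => ?_⟩
    by_cases hc : c ∈ T
    · exact hc₀min c hc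
    · exact le_trans hc₀T (le_of_not_ge hc)
  have hcastadd : ∀ c f : Fin p → ℤ, M.mulVec (fun i => ((c + f) i : ℝ)) =
      M.mulVec (fun i => (c i : ℝ)) + M.mulVec (fun i => (f i : ℝ)) := by
    intro c f
    have h0 : (fun i => ((c + f) i : ℝ)) = (fun i => (c i : ℝ)) + fun i => (f i : ℝ) := by
      funext i
      push_cast
      simp
    rw [h0, Matrix.mulVec_add]
  have hcover : ∀ x : Fin p → ℝ, ∃ g : span ℤ (Set.range b), g +ᵥ x ∈ V := by
    intro x
    obtain ⟨c₀, hc₀⟩ := hmin x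
    have hg : -(M.mulVec (fun i => (c₀ i : ℝ))) ∈ span ℤ (Set.range b) :=
      neg_mem ((hmem _).mpr ⟨c₀, rfl⟩)
    refine ⟨⟨_, hg⟩, ?_⟩
    show -(M.mulVec (fun i => (c₀ i : ℝ))) + x ∈ V
    rw [hVmem]
    intro f
    have h1 : -(M.mulVec (fun i => (c₀ i : ℝ))) + x = x - M.mulVec (fun i => (c₀ i : ℝ)) := by
      abel
    rw [h1]
    have h2 : x - M.mulVec (fun i => (c₀ i : ℝ)) - M.mulVec (fun i => (f i : ℝ)) =
        x - M.mulVec (fun i => ((c₀ + f) i : ℝ)) := by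
      rw [hcastadd]
      abel
    rw [h2]
    exact hc₀ _
  have hdisj : Pairwise (Function.onFun (AEDisjoint volume) fun g : span ℤ (Set.range b) => g +ᵥ V) := by
    intro g g' hgg'
    obtain ⟨f, hf⟩ := (hmem _).mp (sub_mem g'.2 g.2)
    set w : Fin p → ℝ := (g' : Fin p → ℝ) - (g : Fin p → ℝ) with hwdef
    have hwne : w ≠ 0 := sub_ne_zero.mpr fun h => hgg' (Subtype.ext h).symm
    set ψ : (Fin p → ℝ) →ₗ[ℝ] ℝ := ∑ k, w k • LinearMap.proj k with hψ
    have hψapp : ∀ z, ψ z = ∑ k, w k * z k := by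
      intro z
      simp [hψ, LinearMap.sum_apply, LinearMap.smul_apply, LinearMap.proj_apply,
        smul_eq_mul]
    have hψw : ψ w ≠ 0 := by
      rw [hψapp]
      have : 0 < ∑ k, w k * w k := by
        obtain ⟨k, hk⟩ := Function.ne_iff.mp hwne
        exact Finset.sum_pos' (fun k _ => mul_self_nonneg _)
          ⟨k, Finset.mem_univ k, mul_self_pos.mpr (by simpa using hk)⟩
      linarith
    set cst : ℝ := ((∑ k, ((g' : Fin p → ℝ) k) ^ 2) - ∑ k, ((g : Fin p → ℝ) k) ^ 2) / 2
      with hcst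
    have hsub : ((fun g : span ℤ (Set.range b) => g +ᵥ V) g ∩
        (fun g : span ℤ (Set.range b) => g +ᵥ V) g') ⊆ ψ ⁻¹' {cst} := by
      rintro z ⟨hz1, hz2⟩
      obtain ⟨u, hu, rfl⟩ := hz1
      obtain ⟨u', hu', heq⟩ := hz2
      have heq' : (g' : Fin p → ℝ) + u' = (g : Fin p → ℝ) + u := heq
      have hMf : M.mulVec (fun i => (f i : ℝ)) = w := hf
      have hup : u - M.mulVec (fun i => (f i : ℝ)) = u' := by
        rw [hMf, hwdef]
        linear_combination -heq'
      have hMnf : M.mulVec (fun i => ((-f) i : ℝ)) = -w := by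
        have : (fun i => ((-f) i : ℝ)) = -(fun i => (f i : ℝ)) := by
          funext i; push_cast; simp
        rw [this, Matrix.mulVec_neg, hMf]
      have hdown : u' - M.mulVec (fun i => ((-f) i : ℝ)) = u := by
        rw [hMnf, hwdef]
        linear_combination heq'
      have h1 : Q u ≤ Q u' := by
        have := (hVmem u).mp hu f
        rwa [hup] at this
      have h2 : Q u' ≤ Q u := by
        have := (hVmem u').mp hu' (-f)
        rwa [hdown] at this
      have hQeq : Q u = Q u' := le_antisymm h1 h2
      -- rewrite u, u' in terms of z := g + u
      have hueq : u = ((g : Fin p → ℝ) + u) - (g : Fin p → ℝ) := by abel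
      have hu'eq : u' = ((g : Fin p → ℝ) + u) - (g' : Fin p → ℝ) := by
        linear_combination heq'
      set z : Fin p → ℝ := (g : Fin p → ℝ) + u with hz
      have expand : ∀ v : Fin p → ℝ, Q (z - v) =
          (∑ k, z k ^ 2) - 2 * (∑ k, z k * v k) + ∑ k, v k ^ 2 := by
        intro v
        simp only [hQ]
        rw [Finset.mul_sum, ← Finset.sum_sub_distrib, ← Finset.sum_add_distrib]
        exact Finset.sum_congr rfl fun k _ => by simp only [Pi.sub_apply]; ring
      have hQg := expand (g : Fin p → ℝ)
      have hQg' := expand (g' : Fin p → ℝ)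
      rw [← hueq] at hQg
      rw [← hu'eq] at hQg'
      have hψz : ψ z = (∑ k, z k * (g' : Fin p → ℝ) k) - ∑ k, z k * (g : Fin p → ℝ) k := by
        rw [hψapp, ← Finset.sum_sub_distrib]
        exact Finset.sum_congr rfl fun k _ => by
          simp [hwdef, Pi.sub_apply]; ring
      show ψ z ∈ ({cst} : Set ℝ)
      rw [Set.mem_singleton_iff, hψz, hcst]
      rw [hQg, hQg'] at hQeq
      linarith
    refine measure_mono_null hsub ?_
    have hkerne : LinearMap.ker ψ ≠ ⊤ := by
      intro h
      exact hψw (by rw [LinearMap.ker_eq_top] at h; simp [h])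
    have hker0 : volume (LinearMap.ker ψ : Set (Fin p → ℝ)) = 0 :=
      Measure.addHaar_submodule volume _ hkerne
    set z₁ : Fin p → ℝ := (cst / ψ w) • w with hz₁def
    have hz₁ : ψ z₁ = cst := by
      rw [hz₁def, LinearMap.map_smul, smul_eq_mul, div_mul_cancel₀ _ hψw]
    have hpre : ψ ⁻¹' {cst} = (fun y => z₁ + y) '' (LinearMap.ker ψ : Set (Fin p → ℝ)) := by
      ext v
      simp only [Set.mem_preimage, Set.mem_singleton_iff, Set.mem_image, SetLike.mem_coe,
        LinearMap.mem_ker]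
      constructor
      · intro h
        exact ⟨v - z₁, by rw [map_sub, h, hz₁, sub_self], by abel⟩
      · rintro ⟨y, hy, rfl⟩
        rw [map_add, hy, hz₁, add_zero]
    rw [hpre, Set.image_add_left, measure_preimage_add]
    exact hker0
  haveI : Countable (span ℤ (Set.range b)) := inferInstance
  haveI hinv : VAddInvariantMeasure (span ℤ (Set.range b)) (Fin p → ℝ) volume :=
    (inferInstance : VAddInvariantMeasure (span ℤ (Set.range b)).toAddSubgroup (Fin p → ℝ)
      volume)
  haveI : MeasurableVAdd (span ℤ (Set.range b)) (Fin p → ℝ) :=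
    (inferInstance : MeasurableVAdd (span ℤ (Set.range b)).toAddSubgroup (Fin p → ℝ))
  have hfd : IsAddFundamentalDomain (span ℤ (Set.range b)) V volume :=
    ⟨hVclosed.measurableSet.nullMeasurableSet, Filter.Eventually.of_forall hcover, hdisj⟩
  rw [hfd.measure_eq (ZSpan.isAddFundamentalDomain b volume),
    ZSpan.volume_fundamentalDomain]
  congr 1
  have hofb : Matrix.of b = Mᵀ := by
    ext i j
    exact hb i j
  rw [hofb, Matrix.det_transpose]

/-- Theorem 1 of He (2017): if `l^p = n * |det G|`, then the Voronoi cell of the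
origin of the lattice `{(1/l) • Rᵀ Gᵀ f : f ∈ ℤ^p}` has Lebesgue measure `1/n`. -/
theorem voronoi_cell_volume
    (p n : ℕ) (hp : 1 ≤ p) (hn : 1 ≤ n)
    (G R : Matrix (Fin p) (Fin p) ℝ) (hG : IsUnit G.det)
    (hR : Rᵀ * R = 1) (l : ℝ) (hl : 0 < l)
    (hln : l ^ p = (n : ℝ) * |G.det|) :
    volume {z : Fin p → ℝ |
      ∀ f : Fin p → ℤ,
        Real.sqrt (∑ k, z k ^ 2) ≤
          Real.sqrt (∑ k, (z k - (1 / l) * (Rᵀ * Gᵀ).mulVec (fun i => (f i : ℝ)) k) ^ 2)}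
      = (n : ENNReal)⁻¹ := by
  have hl0 : l ≠ 0 := ne_of_gt hl
  have hdetG : G.det ≠ 0 := hG.ne_zero
  have hn0 : (0 : ℝ) < n := by exact_mod_cast hn
  have hdetR : |R.det| = 1 := by
    have h1 : R.det * R.det = 1 := by
      have := congrArg Matrix.det hR
      rwa [Matrix.det_mul, Matrix.det_transpose, Matrix.det_one] at this
    nlinarith [abs_nonneg R.det, abs_mul_abs_self R.det]
  set M : Matrix (Fin p) (Fin p) ℝ := (1 / l) • (Rᵀ * Gᵀ) with hM
  have hdetM : |M.det| = 1 / n := by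
    rw [hM, Matrix.det_smul, Matrix.det_mul, Matrix.det_transpose, Matrix.det_transpose,
      abs_mul, abs_mul, abs_pow, hdetR, one_mul, abs_of_pos (by positivity : (0:ℝ) < 1/l),
      div_pow, one_pow, Fintype.card_fin, hln]
    field_simp
  have hMunit : IsUnit M.det := by
    rw [isUnit_iff_ne_zero]
    intro h
    rw [h, abs_zero] at hdetM
    have : (0:ℝ) < 1 / n := by positivity
    linarith [hdetM ▸ this]
  have hset : {z : Fin p → ℝ |
      ∀ f : Fin p → ℤ,
        Real.sqrt (∑ k, z k ^ 2) ≤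
          Real.sqrt (∑ k, (z k - (1 / l) * (Rᵀ * Gᵀ).mulVec (fun i => (f i : ℝ)) k) ^ 2)}
      = {z : Fin p → ℝ | ∀ f : Fin p → ℤ,
        (∑ k, z k ^ 2) ≤ ∑ k, (z k - M.mulVec (fun i => (f i : ℝ)) k) ^ 2} := by
    ext z
    simp only [Set.mem_setOf_eq]
    refine forall_congr' fun f => ?_
    rw [Real.sqrt_le_sqrt_iff (Finset.sum_nonneg fun k _ => sq_nonneg _)]
    have hMk : ∀ k, M.mulVec (fun i => (f i : ℝ)) k =
        (1 / l) * (Rᵀ * Gᵀ).mulVec (fun i => (f i : ℝ)) k := by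
      intro k
      rw [hM, Matrix.smul_mulVec]
      rfl
    simp_rw [hMk]
  rw [hset, voronoi_aux p M hMunit, hdetM, one_div, ENNReal.ofReal_inv_of_pos hn0,
    ENNReal.ofReal_natCast]
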